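/- Suppose $a_1, a_2 > 0$ and $b_1 + b_2 > a_1 + a_2$ with $b_1 - a_1 > 0$ and $b_2 - a_1 > 0$. Then for every integer $k \geq 0$: $\frac{\Gamma(b_1)\Gamma(b_2)}{\Gamma(a_1)\Gamma(a_2)\Gamma(b_1+b_2-a_1-a_2)} \int_0^1 t^{a_2+k-1}(1-t)^{b_1+b_2-a_1-a_2-1}\, {}_2F_1(b_1-a_1, b_2-a_1; b_1+b_2-a_1-a_2; 1-t)\, dt = \frac{(a_1)_k (a_2)_k}{(b_1)_k (b_2)_k}$. -/

import Mathlib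

open Real

/-- Pochhammer symbol `(a)_n` for real `a`. -/
noncomputable def poch (a : ℝ) (n : ℕ) : ℝ := Polynomial.eval a (ascPochhammer ℝ n)

/-- Gauss hypergeometric series `₂F₁(p,q;r;x)` for real parameters/argument. -/
noncomputable def Gauss2F1 (p q r x : ℝ) : ℝ :=
  ∑' n : ℕ, poch p n * poch q n / (poch r n * n.factorial) * x ^ n

open MeasureTheory Set

lemma poch_zero (a : ℝ) : poch a 0 = 1 := by simp [poch]

lemma poch_succ (a : ℝ) (n : ℕ) : poch a (n + 1) = poch a n * (a + n) := by
  simp [poch, ascPochhammer_succ_right]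

lemma poch_pos {a : ℝ} (ha : 0 < a) (n : ℕ) : 0 < poch a n := by
  induction n with
  | zero => simp [poch_zero]
  | succ n ih => rw [poch_succ]; positivity

lemma Gamma_add_nat {a : ℝ} (ha : 0 < a) (n : ℕ) :
    Real.Gamma (a + n) = poch a n * Real.Gamma a := by
  induction n with
  | zero => simp [poch_zero]
  | succ n ih =>
      have h : a + (n + 1 : ℕ) = (a + n) + 1 := by push_cast; ring
      rw [h, Real.Gamma_add_one (by positivity), ih, poch_succ]; ring

lemma realBeta_integrableOn {x y : ℝ} (hx : 0 < x) (hy : 0 < y) :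
    IntegrableOn (fun t : ℝ => t ^ (x - 1) * (1 - t) ^ (y - 1)) (Ioc 0 1) := by
  have h := Complex.betaIntegral_convergent (u := (x : ℂ)) (v := (y : ℂ))
    (by simpa using hx) (by simpa using hy)
  have h2 : IntegrableOn (fun t : ℝ => (t : ℂ) ^ ((x : ℂ) - 1) * (1 - (t : ℂ)) ^ ((y : ℂ) - 1))
      (Ioc 0 1) := h.1
  have h3 := h2.re
  refine h3.congr (Filter.EventuallyEq.symm ((ae_restrict_iff' measurableSet_Ioc).2 (Filter.Eventually.of_forall fun t ht => ?_)))
  have ht0 : (0:ℝ) ≤ t := le_of_lt ht.1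
  have ht1 : (0:ℝ) ≤ 1 - t := by linarith [ht.2]
  have e1 : ((x : ℂ) - 1) = ((x - 1 : ℝ) : ℂ) := by push_cast; ring
  have e2 : ((y : ℂ) - 1) = ((y - 1 : ℝ) : ℂ) := by push_cast; ring
  have e3 : (1 - (t:ℂ)) = (((1 - t : ℝ)) : ℂ) := by push_cast; ring
  simp only [e1, e2, e3, ← Complex.ofReal_cpow ht0, ← Complex.ofReal_cpow ht1]
  simp [← Complex.ofReal_mul]

lemma realBeta_eq {x y : ℝ} (hx : 0 < x) (hy : 0 < y) :
    ∫ t in Ioc (0:ℝ) 1, t ^ (x - 1) * (1 - t) ^ (y - 1)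
      = Real.Gamma x * Real.Gamma y / Real.Gamma (x + y) := by
  have h := Complex.Gamma_mul_Gamma_eq_betaIntegral (s := (x:ℂ)) (t := (y:ℂ))
    (by simpa using hx) (by simpa using hy)
  have hB : Complex.betaIntegral x y
      = ((∫ t in Ioc (0:ℝ) 1, t ^ (x - 1) * (1 - t) ^ (y - 1) : ℝ) : ℂ) := by
    rw [Complex.betaIntegral]
    rw [← intervalIntegral.integral_of_le (zero_le_one)] at *
    rw [← intervalIntegral.integral_ofReal]
    refine intervalIntegral.integral_congr (fun t ht => ?_)
    rw [uIcc_of_le zero_le_one] at ht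
    have ht0 : (0:ℝ) ≤ t := ht.1
    have ht1 : (0:ℝ) ≤ 1 - t := by linarith [ht.2]
    have e1 : ((x : ℂ) - 1) = ((x - 1 : ℝ) : ℂ) := by push_cast; ring
    have e2 : ((y : ℂ) - 1) = ((y - 1 : ℝ) : ℂ) := by push_cast; ring
    have e3 : (1 - (t:ℂ)) = (((1 - t : ℝ)) : ℂ) := by push_cast; ring
    simp only [e1, e2, e3, ← Complex.ofReal_cpow ht0, ← Complex.ofReal_cpow ht1]
    simp [← Complex.ofReal_mul]
  have hging : Complex.Gamma ((x:ℂ) + y) ≠ 0 :=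
    Complex.Gamma_ne_zero_of_re_pos (by simp; positivity)
  have : ((Real.Gamma x * Real.Gamma y / Real.Gamma (x + y) : ℝ) : ℂ)
      = ((∫ t in Ioc (0:ℝ) 1, t ^ (x - 1) * (1 - t) ^ (y - 1) : ℝ) : ℂ) := by
    rw [← hB, Complex.ofReal_div, Complex.ofReal_mul,
      ← Complex.Gamma_ofReal, ← Complex.Gamma_ofReal, ← Complex.Gamma_ofReal,
      Complex.ofReal_add]
    rw [div_eq_iff hging, h]
    ring
  exact_mod_cast this.symm

lemma key_hasSum {μ : Measure ℝ} {f : ℕ → ℝ → ℝ} {F : ℝ → ℝ}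
    (hm : ∀ n, AEMeasurable (f n) μ)
    (h0 : ∀ n, ∀ᵐ a ∂μ, 0 ≤ f n a)
    (hF : ∀ᵐ a ∂μ, HasSum (fun n => f n a) (F a))
    (hfin : ∑' n, ∫⁻ a, ENNReal.ofReal (f n a) ∂μ ≠ ⊤) :
    (∀ n, Integrable (f n) μ) ∧ Integrable F μ ∧
      HasSum (fun n => ∫ a, f n a ∂μ) (∫ a, F a ∂μ) := by
  set g : ℕ → ℝ → ENNReal := fun n a => ENNReal.ofReal (f n a) with hg
  have hgm : ∀ n, AEMeasurable (g n) μ := fun n => (hm n).ennreal_ofReal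
  have h0' : ∀ᵐ a ∂μ, ∀ n, 0 ≤ f n a := (ae_all_iff).2 h0
  have hkey : ∀ᵐ a ∂μ, ENNReal.ofReal (F a) = ∑' n, g n a := by
    filter_upwards [hF, h0'] with a ha ha0
    exact ENNReal.ofReal_tsum_of_nonneg ha0 ha.summable ▸ by rw [ha.tsum_eq]
  have hlint : ∫⁻ a, ENNReal.ofReal (F a) ∂μ = ∑' n, ∫⁻ a, g n a ∂μ := by
    rw [← lintegral_tsum hgm]
    exact lintegral_congr_ae hkey
  have hF0 : ∀ᵐ a ∂μ, 0 ≤ F a := by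
    filter_upwards [hF, h0'] with a ha ha0 using ha.tsum_eq ▸ tsum_nonneg ha0
  -- measurability of F
  have hGm : AEMeasurable (fun a => ∑' n, g n a) μ := AEMeasurable.ennreal_tsum hgm
  have hFm : AEMeasurable F μ := by
    have : F =ᵐ[μ] fun a => (∑' n, g n a).toReal := by
      filter_upwards [hkey, hF0] with a ha ha0
      rw [← ha, ENNReal.toReal_ofReal ha0]
    exact (hGm.ennreal_toReal).congr this.symm
  have hnorm : ∀ (h : ℝ → ℝ), AEMeasurable h μ → (∀ᵐ a ∂μ, 0 ≤ h a) →
      (∫⁻ a, ENNReal.ofReal (h a) ∂μ ≠ ⊤) → Integrable h μ := by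
    intro h hhm hh0 hhf
    refine ⟨hhm.aestronglyMeasurable, ?_⟩
    rw [hasFiniteIntegral_iff_norm]
    have : ∀ᵐ a ∂μ, ENNReal.ofReal ‖h a‖ = ENNReal.ofReal (h a) :=
      hh0.mono fun a ha => by rw [Real.norm_eq_abs, abs_of_nonneg ha]
    rwa [lintegral_congr_ae this, lt_top_iff_ne_top]
  have hfint : ∀ n, Integrable (f n) μ := fun n =>
    hnorm _ (hm n) (h0 n) (fun h => hfin (ENNReal.tsum_eq_top_of_eq_top ⟨n, h⟩))
  have hFfin : ∫⁻ a, ENNReal.ofReal (F a) ∂μ ≠ ⊤ := by rw [hlint]; exact hfin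
  have hFint : Integrable F μ := hnorm _ hFm hF0 hFfin
  have hival : ∀ (h : ℝ → ℝ), AEMeasurable h μ → (∀ᵐ a ∂μ, 0 ≤ h a) →
      ∫ a, h a ∂μ = (∫⁻ a, ENNReal.ofReal (h a) ∂μ).toReal := fun h hhm hh0 =>
    integral_eq_lintegral_of_nonneg_ae hh0 hhm.aestronglyMeasurable
  refine ⟨hfint, hFint, ?_⟩
  have hs : Summable (fun n => ∫ a, f n a ∂μ) := by
    have := ENNReal.summable_toReal hfin
    refine this.congr fun n => (hival _ (hm n) (h0 n)).symm
  rw [hs.hasSum_iff]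
  rw [hival _ hFm hF0, hlint, ENNReal.tsum_toReal_eq
    (fun n => fun h => hfin (ENNReal.tsum_eq_top_of_eq_top ⟨n, h⟩))]
  exact tsum_congr fun n => hival _ (hm n) (h0 n)

lemma gammaScaled_int {p b : ℝ} (hp : 0 < p) (hb : 0 < b) :
    IntegrableOn (fun u : ℝ => u ^ (p - 1) * Real.exp (-(b * u))) (Ioi 0) := by
  have h := integrableOn_rpow_mul_exp_neg_mul_rpow (p := 1) (s := p - 1) (b := b)
    (by linarith) one_pos hb
  refine h.congr_fun (fun u hu => ?_) measurableSet_Ioi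
  simp only [Real.rpow_one]; ring_nf

lemma gammaScaled_val {p b : ℝ} (hp : 0 < p) (hb : 0 < b) :
    ∫ u in Ioi (0:ℝ), u ^ (p - 1) * Real.exp (-(b * u)) = Real.Gamma p * b ^ (-p) := by
  have h := MeasureTheory.integral_comp_mul_left_Ioi
    (g := fun u : ℝ => u ^ (p - 1) * Real.exp (-u)) 0 hb
  rw [mul_zero] at h
  have hG : ∫ u in Ioi (0:ℝ), u ^ (p - 1) * Real.exp (-u) = Real.Gamma p := by
    rw [Real.Gamma_eq_integral hp]
    exact setIntegral_congr_fun measurableSet_Ioi fun u hu => mul_comm _ _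
  have hcong : ∫ u in Ioi (0:ℝ), (b * u) ^ (p - 1) * Real.exp (-(b * u))
      = b ^ (p - 1) * ∫ u in Ioi (0:ℝ), u ^ (p - 1) * Real.exp (-(b * u)) := by
    rw [← MeasureTheory.integral_const_mul]
    refine setIntegral_congr_fun measurableSet_Ioi fun u hu => ?_
    rw [Real.mul_rpow hb.le (le_of_lt hu)]
    ring
  rw [hcong, hG, smul_eq_mul] at h
  have hbp : (0:ℝ) < b ^ (p - 1) := Real.rpow_pos_of_pos hb _
  have hkey : b ^ (-p) = b⁻¹ / b ^ (p - 1) := by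
    rw [eq_div_iff hbp.ne', ← Real.rpow_add hb, show -p + (p - 1) = -1 by ring,
      Real.rpow_neg_one]
  rw [hkey]
  field_simp at h ⊢
  linear_combination h

lemma hasSum_binomial {p s : ℝ} (hp : 0 < p) (hs0 : 0 ≤ s) (hs1 : s < 1) :
    HasSum (fun n : ℕ => poch p n / n.factorial * s ^ n) ((1 - s) ^ (-p)) := by
  set μ := volume.restrict (Ioi (0:ℝ)) with hμ
  set f : ℕ → ℝ → ℝ := fun n u => s ^ n / n.factorial * (u ^ (p + n - 1) * Real.exp (-(1 * u)))
    with hf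
  set F : ℝ → ℝ := fun u => u ^ (p - 1) * Real.exp (-((1 - s) * u)) with hFdef
  have hm : ∀ n, AEMeasurable (f n) μ := fun n => by
    apply Measurable.aemeasurable; fun_prop
  have h0 : ∀ n, ∀ᵐ a ∂μ, 0 ≤ f n a := by
    intro n
    refine (ae_restrict_iff' measurableSet_Ioi).2 (Filter.Eventually.of_forall fun u hu => ?_)
    have h1 : (0:ℝ) ≤ u ^ (p + n - 1) := Real.rpow_nonneg (le_of_lt hu) _
    have : (0:ℝ) < u := hu
    positivity
  have hF : ∀ᵐ a ∂μ, HasSum (fun n => f n a) (F a) := by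
    refine (ae_restrict_iff' measurableSet_Ioi).2 (Filter.Eventually.of_forall fun u hu => ?_)
    have hu' : (0:ℝ) < u := hu
    have hexp : HasSum (fun n : ℕ => (s * u) ^ n / n.factorial) (Real.exp (s * u)) := by
      rw [Real.exp_eq_exp_ℝ]
      exact NormedSpace.expSeries_div_hasSum_exp (s * u)
    have hmul := hexp.mul_right (u ^ (p - 1) * Real.exp (-u))
    have e1 : (fun n : ℕ => f n u)
        = fun n : ℕ => (s * u) ^ n / n.factorial * (u ^ (p - 1) * Real.exp (-u)) := by
      funext n
      have : p + n - 1 = (p - 1) + n := by ring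
      rw [hf]
      simp only [one_mul, this, Real.rpow_add hu', Real.rpow_natCast, mul_pow]
      ring
    have e2 : F u = Real.exp (s * u) * (u ^ (p - 1) * Real.exp (-u)) := by
      rw [hFdef]
      rw [show Real.exp (s * u) * (u ^ (p - 1) * Real.exp (-u))
          = u ^ (p - 1) * (Real.exp (s * u) * Real.exp (-u)) by ring, ← Real.exp_add]
      congr 2
      ring
    rw [e1, e2]
    exact hmul
  have hfi : ∀ n, Integrable (f n) μ := fun n => by
    have := (gammaScaled_int (p := p + n) (by positivity) one_pos).const_mul
      (s ^ n / n.factorial)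
    refine this.congr ((ae_restrict_iff' measurableSet_Ioi).2
      (Filter.Eventually.of_forall fun u hu => ?_))
    rw [hf]
  have hval : ∀ n, ∫ a, f n a ∂μ = s ^ n / n.factorial * Real.Gamma (p + n) := by
    intro n
    rw [hf, hμ]
    simp only []
    rw [MeasureTheory.integral_const_mul]
    rw [gammaScaled_val (p := p + n) (by positivity) one_pos, Real.one_rpow]
    ring
  -- finiteness: from integrability of F
  have hFi : Integrable F μ := gammaScaled_int hp (by linarith)
  have hfin : ∑' n, ∫⁻ a, ENNReal.ofReal (f n a) ∂μ ≠ ⊤ := by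
    have heq : ∀ n, ∫⁻ a, ENNReal.ofReal (f n a) ∂μ = ENNReal.ofReal (∫ a, f n a ∂μ) :=
      fun n => (MeasureTheory.ofReal_integral_eq_lintegral_ofReal (hfi n) (h0 n)).symm
    -- bound by the lintegral of F via monotone convergence... easier: tsum = lintegral F
    have hkey : ∑' n, ∫⁻ a, ENNReal.ofReal (f n a) ∂μ = ∫⁻ a, ENNReal.ofReal (F a) ∂μ := by
      rw [← MeasureTheory.lintegral_tsum (fun n => (hm n).ennreal_ofReal)]
      refine lintegral_congr_ae ?_
      filter_upwards [hF, (ae_all_iff).2 h0] with a ha ha0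
      rw [← ENNReal.ofReal_tsum_of_nonneg ha0 ha.summable, ha.tsum_eq]
    have hF0 : ∀ᵐ a ∂μ, 0 ≤ F a := by
      refine (ae_restrict_iff' measurableSet_Ioi).2 (Filter.Eventually.of_forall fun u hu => ?_)
      have h1 : (0:ℝ) ≤ u ^ (p - 1) := Real.rpow_nonneg (le_of_lt hu) _
      rw [hFdef]
      positivity
    rw [hkey, ← MeasureTheory.ofReal_integral_eq_lintegral_ofReal hFi hF0]
    exact ENNReal.ofReal_ne_top
  obtain ⟨-, -, hsum⟩ := key_hasSum hm h0 hF hfin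
  have hIF : ∫ a, F a ∂μ = Real.Gamma p * (1 - s) ^ (-p) :=
    gammaScaled_val hp (by linarith)
  rw [hIF] at hsum
  have hsum2 : HasSum (fun n => poch p n / n.factorial * s ^ n * Real.Gamma p)
      (Real.Gamma p * (1 - s) ^ (-p)) := by
    refine hsum.congr_fun fun n => ?_
    rw [hval n, Gamma_add_nat hp]
    ring
  have hΓ : Real.Gamma p ≠ 0 := (Real.Gamma_pos_of_pos hp).ne'
  have := hsum2.div_const (Real.Gamma p)
  rw [mul_comm, mul_div_assoc, div_self hΓ, mul_one] at this
  refine this.congr_fun fun n => ?_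
  field_simp

lemma tsum_lint_eq {μ : Measure ℝ} {f : ℕ → ℝ → ℝ} {F : ℝ → ℝ}
    (hm : ∀ n, AEMeasurable (f n) μ)
    (h0 : ∀ n, ∀ᵐ a ∂μ, 0 ≤ f n a)
    (hF : ∀ᵐ a ∂μ, HasSum (fun n => f n a) (F a)) :
    ∑' n, ∫⁻ a, ENNReal.ofReal (f n a) ∂μ = ∫⁻ a, ENNReal.ofReal (F a) ∂μ := by
  rw [← MeasureTheory.lintegral_tsum (fun n => (hm n).ennreal_ofReal)]
  refine lintegral_congr_ae ?_
  filter_upwards [hF, (ae_all_iff).2 h0] with a ha ha0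
  rw [← ENNReal.ofReal_tsum_of_nonneg ha0 ha.summable, ha.tsum_eq]

lemma realBeta_integrableOn_Ioo {x y : ℝ} (hx : 0 < x) (hy : 0 < y) :
    IntegrableOn (fun t : ℝ => t ^ (x - 1) * (1 - t) ^ (y - 1)) (Ioo 0 1) :=
  (realBeta_integrableOn hx hy).mono_set Ioo_subset_Ioc_self

lemma realBeta_eq_Ioo {x y : ℝ} (hx : 0 < x) (hy : 0 < y) :
    ∫ t in Ioo (0:ℝ) 1, t ^ (x - 1) * (1 - t) ^ (y - 1)
      = Real.Gamma x * Real.Gamma y / Real.Gamma (x + y) := by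
  rw [← MeasureTheory.integral_Ioc_eq_integral_Ioo]
  exact realBeta_eq hx hy

lemma gauss_sum {p q r : ℝ} (hp : 0 < p) (hq : 0 < q) (hrq : 0 < r - q)
    (hrpq : 0 < r - p - q) :
    HasSum (fun n : ℕ => poch p n * poch q n / (poch r n * n.factorial))
      (Real.Gamma r * Real.Gamma (r - p - q) /
        (Real.Gamma (r - p) * Real.Gamma (r - q))) := by
  have hr : 0 < r := by linarith
  set μ := volume.restrict (Ioo (0:ℝ) 1) with hμ
  set f : ℕ → ℝ → ℝ := fun n s =>
    poch p n / n.factorial * (s ^ (q + n - 1) * (1 - s) ^ (r - q - 1)) with hf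
  set F : ℝ → ℝ := fun s => s ^ (q - 1) * (1 - s) ^ (r - p - q - 1) with hFdef
  have hm : ∀ n, AEMeasurable (f n) μ := fun n => by
    apply Measurable.aemeasurable; fun_prop
  have h0 : ∀ n, ∀ᵐ a ∂μ, 0 ≤ f n a := by
    intro n
    refine (ae_restrict_iff' measurableSet_Ioo).2 (Filter.Eventually.of_forall fun s hs => ?_)
    have h1 : (0:ℝ) ≤ s ^ (q + n - 1) := Real.rpow_nonneg hs.1.le _
    have h2 : (0:ℝ) ≤ (1 - s) ^ (r - q - 1) := Real.rpow_nonneg (by linarith [hs.2]) _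
    have h3 : (0:ℝ) < poch p n := poch_pos hp n
    positivity
  have hF : ∀ᵐ a ∂μ, HasSum (fun n => f n a) (F a) := by
    refine (ae_restrict_iff' measurableSet_Ioo).2 (Filter.Eventually.of_forall fun s hs => ?_)
    have hs0 : (0:ℝ) < s := hs.1
    have hs1 : (0:ℝ) < 1 - s := by linarith [hs.2]
    have hbin := (hasSum_binomial hp hs0.le hs.2).mul_right
      (s ^ (q - 1) * (1 - s) ^ (r - q - 1))
    have e1 : (fun n : ℕ => poch p n / n.factorial * s ^ n *
        (s ^ (q - 1) * (1 - s) ^ (r - q - 1))) = fun n => f n s := by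
      funext n
      rw [hf]
      simp only [show q + (n:ℝ) - 1 = (q - 1) + n by ring, Real.rpow_add hs0,
        Real.rpow_natCast]
      ring
    have e2 : (1 - s) ^ (-p) * (s ^ (q - 1) * (1 - s) ^ (r - q - 1)) = F s := by
      rw [hFdef]
      simp only [show r - p - q - 1 = -p + (r - q - 1) by ring, Real.rpow_add hs1]
      ring
    rw [← e1, ← e2]
    exact hbin
  have hFi : Integrable F μ := realBeta_integrableOn_Ioo hq hrpq
  have hF0 : ∀ᵐ a ∂μ, 0 ≤ F a := by
    refine (ae_restrict_iff' measurableSet_Ioo).2 (Filter.Eventually.of_forall fun s hs => ?_)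
    have h1 : (0:ℝ) ≤ s ^ (q - 1) := Real.rpow_nonneg hs.1.le _
    have h2 : (0:ℝ) ≤ (1 - s) ^ (r - p - q - 1) := Real.rpow_nonneg (by linarith [hs.2]) _
    rw [hFdef]
    positivity
  have hfin : ∑' n, ∫⁻ a, ENNReal.ofReal (f n a) ∂μ ≠ ⊤ := by
    rw [tsum_lint_eq hm h0 hF, ← MeasureTheory.ofReal_integral_eq_lintegral_ofReal hFi hF0]
    exact ENNReal.ofReal_ne_top
  obtain ⟨-, -, hsum⟩ := key_hasSum hm h0 hF hfin
  have hIF : ∫ a, F a ∂μ = Real.Gamma q * Real.Gamma (r - p - q) / Real.Gamma (r - p) := by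
    rw [hFdef, hμ]
    rw [show ∫ a in Ioo (0:ℝ) 1, a ^ (q - 1) * (1 - a) ^ (r - p - q - 1)
        = Real.Gamma q * Real.Gamma (r - p - q) / Real.Gamma (q + (r - p - q))
        from realBeta_eq_Ioo hq hrpq]
    rw [show q + (r - p - q) = r - p by ring]
  have hval : ∀ n, ∫ a, f n a ∂μ
      = poch p n * poch q n / (poch r n * n.factorial)
        * (Real.Gamma q * Real.Gamma (r - q) / Real.Gamma r) := by
    intro n
    rw [hf, hμ]
    simp only []
    rw [MeasureTheory.integral_const_mul]
    have hb := realBeta_eq_Ioo (x := q + n) (y := r - q) (by positivity) hrq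
    rw [show q + (n:ℝ) + (r - q) = r + n by ring] at hb
    rw [hb, Gamma_add_nat hq, Gamma_add_nat hr]
    have h1 : (0:ℝ) < poch r n := poch_pos hr n
    have h2 : Real.Gamma r ≠ 0 := (Real.Gamma_pos_of_pos hr).ne'
    field_simp
  rw [hIF] at hsum
  have hsum2 := hsum.congr_fun (fun n => (hval n).symm)
  set c := Real.Gamma q * Real.Gamma (r - q) / Real.Gamma r with hc
  have hcpos : 0 < c := by
    rw [hc]
    exact div_pos (mul_pos (Real.Gamma_pos_of_pos hq) (Real.Gamma_pos_of_pos hrq))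
      (Real.Gamma_pos_of_pos hr)
  have := hsum2.div_const c
  have harr : Real.Gamma q * Real.Gamma (r - p - q) / Real.Gamma (r - p) / c
      = Real.Gamma r * Real.Gamma (r - p - q) / (Real.Gamma (r - p) * Real.Gamma (r - q)) := by
    rw [hc]
    have h1 : Real.Gamma q ≠ 0 := (Real.Gamma_pos_of_pos hq).ne'
    have h2 : Real.Gamma (r - q) ≠ 0 := (Real.Gamma_pos_of_pos hrq).ne'
    have h3 : Real.Gamma r ≠ 0 := (Real.Gamma_pos_of_pos hr).ne'
    have h4 : Real.Gamma (r - p) ≠ 0 := (Real.Gamma_pos_of_pos (by linarith)).ne'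
    field_simp
  rw [harr] at this
  refine this.congr_fun fun n => ?_
  rw [mul_div_assoc _ c c, div_self hcpos.ne', mul_one]

lemma tendsto_ratio_aux (c d : ℝ) :
    Filter.Tendsto (fun n : ℕ => (c + n) / (d + n)) Filter.atTop (nhds 1) := by
  have h1 : Filter.Tendsto (fun n : ℕ => 1 + c / n) Filter.atTop (nhds 1) := by
    simpa using tendsto_const_nhds.add (tendsto_const_div_atTop_nhds_zero_nat c)
  have h2 : Filter.Tendsto (fun n : ℕ => 1 + d / n) Filter.atTop (nhds 1) := by
    simpa using tendsto_const_nhds.add (tendsto_const_div_atTop_nhds_zero_nat d)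
  have h3 := h1.div h2 one_ne_zero
  rw [div_one] at h3
  refine h3.congr' ?_
  obtain ⟨N, hN⟩ := exists_nat_gt (max (-d) 0)
  refine Filter.eventually_atTop.2 ⟨N + 1, fun n hn => ?_⟩
  have hn0 : (0:ℝ) < n := by
    have : (N:ℝ) < n := by exact_mod_cast Nat.lt_of_lt_of_le (Nat.lt_succ_self N) hn
    have := (le_max_right (-d) 0).trans_lt hN
    linarith
  have hnd : (0:ℝ) < d + n := by
    have : (N:ℝ) < n := by exact_mod_cast Nat.lt_of_lt_of_le (Nat.lt_succ_self N) hn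
    have := (le_max_left (-d) 0).trans_lt hN
    linarith
  have h4 : ((n:ℝ)) ≠ 0 := hn0.ne'
  have h5 : ((n:ℝ) + d) ≠ 0 := by linarith
  have h6 : (d + (n:ℝ)) ≠ 0 := by linarith
  simp only [Pi.div_apply]
  field_simp
  ring

lemma summable_gaussTerms {p q β x : ℝ} (hp : 0 < p) (hq : 0 < q) (hβ : 0 < β)
    (hx0 : 0 < x) (hx1 : x < 1) :
    Summable (fun n : ℕ => poch p n * poch q n / (poch β n * n.factorial) * x ^ n) := by
  set u : ℕ → ℝ := fun n => poch p n * poch q n / (poch β n * n.factorial) * x ^ n with hu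
  have hupos : ∀ n, 0 < u n := fun n => by
    have h1 := poch_pos hp n; have h2 := poch_pos hq n; have h3 := poch_pos hβ n
    have h4 : (0:ℝ) < n.factorial := by exact_mod_cast n.factorial_pos
    rw [hu]; positivity
  refine summable_of_ratio_test_tendsto_lt_one hx1
    (Filter.Eventually.of_forall fun n => (hupos n).ne') ?_
  have hratio : ∀ n : ℕ, ‖u (n+1)‖ / ‖u n‖ = x * ((p + n) / (1 + n)) * ((q + n) / (β + n)) := by
    intro n
    rw [Real.norm_eq_abs, Real.norm_eq_abs, abs_of_pos (hupos (n+1)), abs_of_pos (hupos n), hu]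
    simp only [poch_succ, Nat.factorial_succ, pow_succ]
    have h1 := (poch_pos hp n).ne'; have h2 := (poch_pos hq n).ne'
    have h3 := (poch_pos hβ n).ne'
    have h4 : ((n:ℝ)+1) ≠ 0 := by positivity
    have h5 : (n.factorial : ℝ) ≠ 0 := by exact_mod_cast n.factorial_pos.ne'
    have h6 : x ^ n ≠ 0 := by positivity
    have h7 : (0:ℝ) < β + n := by have := poch_pos hβ n; positivity
    have h8 : (0:ℝ) < p + n := by positivity
    have h9 : (0:ℝ) < q + n := by positivity
    field_simp
    push_cast
    ring
  rw [show (fun n : ℕ => ‖u (n+1)‖ / ‖u n‖)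
      = fun n : ℕ => x * ((p + n) / (1 + n)) * ((q + n) / (β + n)) from funext hratio]
  have := ((tendsto_const_nhds (x := x)).mul (tendsto_ratio_aux p 1)).mul
    (tendsto_ratio_aux q β)
  simpa using this

/-- Moment identity for the representing density of `₃F₂`. -/
theorem stmt16 (a₁ a₂ b₁ b₂ : ℝ) (ha₁ : 0 < a₁) (ha₂ : 0 < a₂)
    (hψ : a₁ + a₂ < b₁ + b₂) (h₁ : 0 < b₁ - a₁) (h₂ : 0 < b₂ - a₁) (k : ℕ) :
    Real.Gamma b₁ * Real.Gamma b₂ /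
        (Real.Gamma a₁ * Real.Gamma a₂ * Real.Gamma (b₁ + b₂ - a₁ - a₂)) *
      (∫ t in (0:ℝ)..1,
        t ^ (a₂ + k - 1) * (1 - t) ^ (b₁ + b₂ - a₁ - a₂ - 1) *
          Gauss2F1 (b₁ - a₁) (b₂ - a₁) (b₁ + b₂ - a₁ - a₂) (1 - t)) =
      poch a₁ k * poch a₂ k / (poch b₁ k * poch b₂ k) := by
  set p := b₁ - a₁ with hpdef
  set q := b₂ - a₁ with hqdef
  set β := b₁ + b₂ - a₁ - a₂ with hβdef
  set α := a₂ + (k:ℝ) with hαdef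
  set r := α + β with hrdef
  have hp : 0 < p := h₁
  have hq : 0 < q := h₂
  have hβ : 0 < β := by rw [hβdef]; linarith
  have hα : 0 < α := by rw [hαdef]; positivity
  have hr : 0 < r := by rw [hrdef]; linarith
  have hk : (0:ℝ) ≤ k := Nat.cast_nonneg k
  have hrq : 0 < r - q := by rw [hrdef, hαdef, hβdef, hqdef]; linarith
  have hrpq : 0 < r - p - q := by rw [hrdef, hαdef, hβdef, hqdef, hpdef]; linarith
  -- the summand of the Gauss2F1 series
  set u : ℕ → ℝ := fun n => poch p n * poch q n / (poch β n * n.factorial) with hu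
  set μ := volume.restrict (Ioo (0:ℝ) 1) with hμ
  set f : ℕ → ℝ → ℝ := fun n t => u n * (t ^ (α - 1) * (1 - t) ^ (β + n - 1)) with hf
  set F : ℝ → ℝ := fun t => t ^ (α - 1) * (1 - t) ^ (β - 1) * Gauss2F1 p q β (1 - t)
    with hFdef
  have hun : ∀ n, 0 < u n := fun n => by
    have h1 := poch_pos hp n; have h2 := poch_pos hq n; have h3 := poch_pos hβ n
    have h4 : (0:ℝ) < n.factorial := by exact_mod_cast n.factorial_pos
    rw [hu]; positivity
  have hm : ∀ n, AEMeasurable (f n) μ := fun n => by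
    apply Measurable.aemeasurable; fun_prop
  have h0 : ∀ n, ∀ᵐ a ∂μ, 0 ≤ f n a := by
    intro n
    refine (ae_restrict_iff' measurableSet_Ioo).2 (Filter.Eventually.of_forall fun t ht => ?_)
    have h1 : (0:ℝ) ≤ t ^ (α - 1) := Real.rpow_nonneg ht.1.le _
    have h2 : (0:ℝ) ≤ (1 - t) ^ (β + n - 1) := Real.rpow_nonneg (by linarith [ht.2]) _
    have h3 := hun n
    positivity
  have hF : ∀ᵐ a ∂μ, HasSum (fun n => f n a) (F a) := by
    refine (ae_restrict_iff' measurableSet_Ioo).2 (Filter.Eventually.of_forall fun t ht => ?_)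
    have ht0 : (0:ℝ) < t := ht.1
    have ht1 : (0:ℝ) < 1 - t := by linarith [ht.2]
    have hsummable : Summable (fun n : ℕ =>
        poch p n * poch q n / (poch β n * n.factorial) * (1 - t) ^ n) :=
      summable_gaussTerms hp hq hβ ht1 (by linarith)
    have hhs : HasSum (fun n : ℕ =>
        poch p n * poch q n / (poch β n * n.factorial) * (1 - t) ^ n)
        (Gauss2F1 p q β (1 - t)) := hsummable.hasSum
    have hmul := hhs.mul_right (t ^ (α - 1) * (1 - t) ^ (β - 1))
    have e1 : (fun n : ℕ => poch p n * poch q n / (poch β n * n.factorial) * (1 - t) ^ n *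
        (t ^ (α - 1) * (1 - t) ^ (β - 1))) = fun n => f n t := by
      funext n
      rw [hf, hu]
      simp only [show β + (n:ℝ) - 1 = (β - 1) + n by ring, Real.rpow_add ht1,
        Real.rpow_natCast]
      ring
    have e2 : Gauss2F1 p q β (1 - t) * (t ^ (α - 1) * (1 - t) ^ (β - 1)) = F t := by
      rw [hFdef]; ring
    rw [← e1, ← e2]
    exact hmul
  have hfi : ∀ n, Integrable (f n) μ := fun n => by
    have hint := (realBeta_integrableOn_Ioo (x := α) (y := β + n) hα (by positivity)).const_mul
      (u n)
    refine hint.congr ((ae_restrict_iff' measurableSet_Ioo).2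
      (Filter.Eventually.of_forall fun t ht => ?_))
    rw [hf]
  have hΓα := Real.Gamma_pos_of_pos hα
  have hΓβ := Real.Gamma_pos_of_pos hβ
  have hΓr := Real.Gamma_pos_of_pos hr
  have hval : ∀ n, ∫ a, f n a ∂μ
      = Real.Gamma α * Real.Gamma β / Real.Gamma r
        * (poch p n * poch q n / (poch r n * n.factorial)) := by
    intro n
    rw [hf, hμ]
    simp only []
    rw [MeasureTheory.integral_const_mul]
    have hb := realBeta_eq_Ioo (x := α) (y := β + n) hα (by positivity)
    rw [show α + (β + (n:ℝ)) = r + n by rw [hrdef]; ring] at hb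
    rw [show ∫ t in Ioo (0:ℝ) 1, t ^ (α - 1) * (1 - t) ^ (β + (n:ℝ) - 1)
        = Real.Gamma α * Real.Gamma (β + n) / Real.Gamma (r + n) from hb]
    rw [Gamma_add_nat hβ, Gamma_add_nat hr, hu]
    have h1 := (poch_pos hβ n).ne'
    have h2 := (poch_pos hr n).ne'
    have h3 : (n.factorial : ℝ) ≠ 0 := by exact_mod_cast n.factorial_pos.ne'
    field_simp
  have hgauss := gauss_sum hp hq hrq hrpq
  have hfin : ∑' n, ∫⁻ a, ENNReal.ofReal (f n a) ∂μ ≠ ⊤ := by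
    have heq : ∀ n, ∫⁻ a, ENNReal.ofReal (f n a) ∂μ = ENNReal.ofReal (∫ a, f n a ∂μ) :=
      fun n => (MeasureTheory.ofReal_integral_eq_lintegral_ofReal (hfi n) (h0 n)).symm
    have hnn : ∀ n, 0 ≤ ∫ a, f n a ∂μ := fun n =>
      integral_nonneg_of_ae (h0 n)
    have hsummable : Summable (fun n => ∫ a, f n a ∂μ) := by
      refine (hgauss.summable.mul_left (Real.Gamma α * Real.Gamma β / Real.Gamma r)).congr
        fun n => (hval n).symm
    rw [show (fun n => ∫⁻ a, ENNReal.ofReal (f n a) ∂μ)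
        = fun n => ENNReal.ofReal (∫ a, f n a ∂μ) from funext heq]
    rw [← ENNReal.ofReal_tsum_of_nonneg hnn hsummable]
    exact ENNReal.ofReal_ne_top
  obtain ⟨-, -, hsum⟩ := key_hasSum hm h0 hF hfin
  -- compute the integral of F
  have hsum2 : HasSum (fun n => Real.Gamma α * Real.Gamma β / Real.Gamma r
      * (poch p n * poch q n / (poch r n * n.factorial))) (∫ a, F a ∂μ) :=
    hsum.congr_fun fun n => (hval n).symm
  have hsum3 := hgauss.mul_left (Real.Gamma α * Real.Gamma β / Real.Gamma r)
  have hIF : ∫ a, F a ∂μ = Real.Gamma α * Real.Gamma β / Real.Gamma r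
      * (Real.Gamma r * Real.Gamma (r - p - q) /
        (Real.Gamma (r - p) * Real.Gamma (r - q))) :=
    hsum2.unique hsum3
  -- relate interval integral to set integral
  have hIval : (∫ t in (0:ℝ)..1, F t) = ∫ a, F a ∂μ := by
    rw [intervalIntegral.integral_of_le zero_le_one, hμ,
      ← MeasureTheory.integral_Ioc_eq_integral_Ioo]
  rw [hIval, hIF]
  -- final Gamma arithmetic
  have e1 : r - p - q = a₁ + k := by rw [hrdef, hαdef, hβdef, hpdef, hqdef]; ring
  have e2 : r - p = b₂ + k := by rw [hrdef, hαdef, hβdef, hpdef]; ring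
  have e3 : r - q = b₁ + k := by rw [hrdef, hαdef, hβdef, hqdef]; ring
  rw [e1, e2, e3, Gamma_add_nat ha₁, Gamma_add_nat (by linarith : (0:ℝ) < b₂),
    Gamma_add_nat (by linarith : (0:ℝ) < b₁)]
  rw [show α = a₂ + (k:ℕ) from hαdef, Gamma_add_nat ha₂]
  have hΓa₁ := Real.Gamma_pos_of_pos ha₁
  have hΓa₂ := Real.Gamma_pos_of_pos ha₂
  have hΓb₁ := Real.Gamma_pos_of_pos (show (0:ℝ) < b₁ by linarith)
  have hΓb₂ := Real.Gamma_pos_of_pos (show (0:ℝ) < b₂ by linarith)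
  have hpa₁ := poch_pos ha₁ k
  have hpa₂ := poch_pos ha₂ k
  have hpb₁ := poch_pos (show (0:ℝ) < b₁ by linarith) k
  have hpb₂ := poch_pos (show (0:ℝ) < b₂ by linarith) k
  field_simp
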